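/- Let 0 ≤ μ < 1 and 0 < η ≤ 1. Suppose u : (0,η] → ℂ is locally absolutely continuous with ∫₀^η x^μ |u'(x)|² dx < ∞. Then u has a continuous extension to [0,η], denoted u(0), and |u(η) − u(0)| ≤ (1 − μ)^{−1/2} · η^{(1−μ)/2} · (∫₀^η x^μ |u'(x)|² dx)^{1/2}. -/

import Mathlib

open MeasureTheory Set Filter Topology

/-- Let `0 ≤ μ < 1` and `0 < η ≤ 1`. If `u : (0, η] → ℂ` is locally
absolutely continuous with a.e. derivative `u'` and `∫₀^η x^μ |u'(x)|² dx < ∞`, then `u` has a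
continuous extension to `[0, η]` (i.e. a limit `L = u(0)` at `0⁺`) and
`|u(η) - u(0)| ≤ (1 - μ)^{-1/2} · η^{(1-μ)/2} · (∫₀^η x^μ |u'(x)|² dx)^{1/2}`. -/
theorem extension_estimate (μ η : ℝ) (hμ0 : 0 ≤ μ) (hμ1 : μ < 1)
    (hη0 : 0 < η) (hη1 : η ≤ 1) (u u' : ℝ → ℂ)
    (hac : ∀ x y : ℝ, 0 < x → x ≤ y → y ≤ η →
      IntervalIntegrable u' volume x y ∧ u y - u x = ∫ t in x..y, u' t)
    (hint : IntegrableOn (fun x => x ^ μ * ‖u' x‖ ^ 2) (Ioo 0 η) volume) :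
    ∃ L : ℂ, Tendsto u (𝓝[>] (0 : ℝ)) (𝓝 L) ∧
      ‖u η - L‖ ≤ (1 - μ) ^ (-(1 : ℝ) / 2) * η ^ ((1 - μ) / 2) *
        Real.sqrt (∫ x in Ioo (0 : ℝ) η, x ^ μ * ‖u' x‖ ^ 2) := by
  have h1μ : (0:ℝ) < 1 - μ := by linarith
  set I : ℝ := ∫ x in Ioo (0:ℝ) η, x ^ μ * ‖u' x‖ ^ 2 with hIdef
  have hI0 : 0 ≤ I := setIntegral_nonneg measurableSet_Ioo fun t ht =>
    mul_nonneg (Real.rpow_nonneg ht.1.le μ) (sq_nonneg _)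
  have hres : volume.restrict (Ioo (0:ℝ) η) = volume.restrict (Ioc (0:ℝ) η) :=
    Measure.restrict_congr_set Ioo_ae_eq_Ioc
  have hIoc : IntegrableOn (fun x => x ^ μ * ‖u' x‖ ^ 2) (Ioc 0 η) volume := by
    rwa [IntegrableOn, ← hres]
  have hIeq : I = ∫ x in Ioc (0:ℝ) η, x ^ μ * ‖u' x‖ ^ 2 := by
    rw [hIdef, hres]
  -- the key estimate
  have key : ∀ x y : ℝ, 0 < x → x ≤ y → y ≤ η →
      ‖u y - u x‖ ≤ Real.sqrt (y ^ (1 - μ) / (1 - μ)) * Real.sqrt I := by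
    intro x y hx hxy hyη
    obtain ⟨hii, heq⟩ := hac x y hx hxy hyη
    have hmeas : AEStronglyMeasurable u' (volume.restrict (Ioc x y)) :=
      hii.1.aestronglyMeasurable
    have hpos : ∀ᵐ t ∂(volume.restrict (Ioc x y)), t ∈ Ioc x y :=
      ae_restrict_mem measurableSet_Ioc
    set f : ℝ → ℝ := fun t => t ^ (-(μ/2)) with hf_def
    set g : ℝ → ℝ := fun t => t ^ (μ/2) * ‖u' t‖ with hg_def
    have hcontOn : ∀ c : ℝ, ContinuousOn (fun t : ℝ => t ^ c) (Ioc x y) := fun c t ht =>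
      (Real.continuousAt_rpow_const t c (Or.inl (hx.trans ht.1).ne')).continuousWithinAt
    have hf_meas : AEStronglyMeasurable f (volume.restrict (Ioc x y)) :=
      ((hcontOn _).aestronglyMeasurable measurableSet_Ioc)
    have hg_meas : AEStronglyMeasurable g (volume.restrict (Ioc x y)) :=
      ((hcontOn _).aestronglyMeasurable measurableSet_Ioc).mul hmeas.norm
    have hrint : IntegrableOn (fun t : ℝ => t ^ (-μ)) (Ioc x y) volume := by
      have := intervalIntegral.intervalIntegrable_rpow' (a := x) (b := y)
        (show (-1:ℝ) < -μ by linarith)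
      rwa [intervalIntegrable_iff_integrableOn_Ioc_of_le hxy] at this
    have hgsqint : IntegrableOn (fun t : ℝ => t ^ μ * ‖u' t‖ ^ 2) (Ioc x y) volume :=
      hIoc.mono_set (Ioc_subset_Ioc hx.le hyη)
    have hfsq : ∀ᵐ t ∂(volume.restrict (Ioc x y)), f t ^ (2:ℝ) = t ^ (-μ) := by
      filter_upwards [hpos] with t ht
      have ht0 : (0:ℝ) < t := hx.trans ht.1
      rw [hf_def, ← Real.rpow_mul ht0.le]
      norm_num
    have hgsq : ∀ᵐ t ∂(volume.restrict (Ioc x y)), g t ^ (2:ℝ) = t ^ μ * ‖u' t‖ ^ 2 := by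
      filter_upwards [hpos] with t ht
      have ht0 : (0:ℝ) < t := hx.trans ht.1
      rw [hg_def]
      rw [Real.mul_rpow (Real.rpow_nonneg ht0.le _) (norm_nonneg _),
        ← Real.rpow_mul ht0.le,
        show ((2:ℝ)) = ((2:ℕ):ℝ) by norm_num, Real.rpow_natCast]
      norm_num
    have hfsq' : ∀ᵐ t ∂(volume.restrict (Ioc x y)), f t ^ (2:ℕ) = t ^ (-μ) := by
      filter_upwards [hfsq] with t ht
      rw [← ht, show ((2:ℝ)) = ((2:ℕ):ℝ) by norm_num, Real.rpow_natCast]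
    have hgsq' : ∀ᵐ t ∂(volume.restrict (Ioc x y)), g t ^ (2:ℕ) = t ^ μ * ‖u' t‖ ^ 2 := by
      filter_upwards [hgsq] with t ht
      rw [← ht, show ((2:ℝ)) = ((2:ℕ):ℝ) by norm_num, Real.rpow_natCast]
    have hfL2 : MemLp f (ENNReal.ofReal 2) (volume.restrict (Ioc x y)) := by
      rw [show ENNReal.ofReal 2 = 2 by norm_num]
      exact (memLp_two_iff_integrable_sq hf_meas).2 (hrint.congr (hfsq'.mono fun t ht => ht.symm))
    have hgL2 : MemLp g (ENNReal.ofReal 2) (volume.restrict (Ioc x y)) := by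
      rw [show ENNReal.ofReal 2 = 2 by norm_num]
      exact (memLp_two_iff_integrable_sq hg_meas).2 (hgsqint.congr (hgsq'.mono fun t ht => ht.symm))
    have hf_nonneg : 0 ≤ᵐ[volume.restrict (Ioc x y)] f := by
      filter_upwards [hpos] with t ht
      exact Real.rpow_nonneg (hx.trans ht.1).le _
    have hg_nonneg : 0 ≤ᵐ[volume.restrict (Ioc x y)] g := by
      filter_upwards [hpos] with t ht
      exact mul_nonneg (Real.rpow_nonneg (hx.trans ht.1).le _) (norm_nonneg _)
    have hpq : (2:ℝ).HolderConjugate 2 := by constructor <;> norm_num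
    have holder := MeasureTheory.integral_mul_le_Lp_mul_Lq_of_nonneg hpq
      hf_nonneg hg_nonneg hfL2 hgL2
    have e1 : ∫ t in Ioc x y, f t * g t = ∫ t in Ioc x y, ‖u' t‖ := by
      refine integral_congr_ae ?_
      filter_upwards [hpos] with t ht
      have ht0 : (0:ℝ) < t := hx.trans ht.1
      rw [hf_def, hg_def, ← mul_assoc, ← Real.rpow_add ht0]
      norm_num
    have e2 : ∫ t in Ioc x y, f t ^ (2:ℝ) = ∫ t in Ioc x y, t ^ (-μ) :=
      integral_congr_ae hfsq
    have e3 : ∫ t in Ioc x y, g t ^ (2:ℝ) = ∫ t in Ioc x y, t ^ μ * ‖u' t‖ ^ 2 :=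
      integral_congr_ae hgsq
    rw [e1, e2, e3] at holder
    have b1 : ∫ t in Ioc x y, t ^ (-μ) ≤ y ^ (1 - μ) / (1 - μ) := by
      rw [← intervalIntegral.integral_of_le hxy,
        integral_rpow (Or.inl (show (-1:ℝ) < -μ by linarith))]
      rw [show -μ + 1 = 1 - μ by ring]
      have hx1 : 0 ≤ x ^ (1 - μ) := Real.rpow_nonneg hx.le _
      gcongr
      linarith
    have b2 : ∫ t in Ioc x y, t ^ μ * ‖u' t‖ ^ 2 ≤ I := by
      rw [hIeq]
      refine setIntegral_mono_set hIoc ?_ (HasSubset.Subset.eventuallyLE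
        (Ioc_subset_Ioc hx.le hyη))
      filter_upwards [ae_restrict_mem (measurableSet_Ioc (a := (0:ℝ)) (b := η))] with t ht
      exact mul_nonneg (Real.rpow_nonneg ht.1.le _) (sq_nonneg _)
    calc ‖u y - u x‖ = ‖∫ t in x..y, u' t‖ := by rw [heq]
      _ ≤ ∫ t in x..y, ‖u' t‖ := intervalIntegral.norm_integral_le_integral_norm hxy
      _ = ∫ t in Ioc x y, ‖u' t‖ := intervalIntegral.integral_of_le hxy
      _ ≤ (∫ t in Ioc x y, t ^ (-μ)) ^ ((1:ℝ)/2) *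
          (∫ t in Ioc x y, t ^ μ * ‖u' t‖ ^ 2) ^ ((1:ℝ)/2) := by
          simpa using holder
      _ = Real.sqrt (∫ t in Ioc x y, t ^ (-μ)) *
          Real.sqrt (∫ t in Ioc x y, t ^ μ * ‖u' t‖ ^ 2) := by
          rw [Real.sqrt_eq_rpow, Real.sqrt_eq_rpow]
      _ ≤ Real.sqrt (y ^ (1 - μ) / (1 - μ)) * Real.sqrt I :=
          mul_le_mul (Real.sqrt_le_sqrt b1) (Real.sqrt_le_sqrt b2)
            (Real.sqrt_nonneg _) (Real.sqrt_nonneg _)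
  -- the bound function tends to 0 at 0⁺
  have hb : Tendsto (fun δ : ℝ => Real.sqrt (δ ^ (1 - μ) / (1 - μ)) * Real.sqrt I)
      (𝓝[>] (0:ℝ)) (𝓝 0) := by
    have h1 : ContinuousAt (fun δ : ℝ => δ ^ (1 - μ)) 0 :=
      Real.continuousAt_rpow_const 0 (1 - μ) (Or.inr h1μ.le)
    have h2 : ContinuousAt
        (fun δ : ℝ => Real.sqrt (δ ^ (1 - μ) / (1 - μ)) * Real.sqrt I) 0 :=
      (Real.continuous_sqrt.continuousAt.comp (h1.div_const _)).mul continuousAt_const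
    have : Tendsto (fun δ : ℝ => Real.sqrt (δ ^ (1 - μ) / (1 - μ)) * Real.sqrt I)
        (𝓝[>] (0:ℝ)) (𝓝 (Real.sqrt ((0:ℝ) ^ (1 - μ) / (1 - μ)) * Real.sqrt I)) :=
      h2.tendsto.mono_left nhdsWithin_le_nhds
    simpa [Real.zero_rpow h1μ.ne'] using this
  -- Cauchy at 0⁺, hence a limit exists
  have hcau : Cauchy (map u (𝓝[>] (0:ℝ))) := by
    rw [Metric.cauchy_iff]
    refine ⟨map_neBot, fun ε hε => ?_⟩
    have hev : ∀ᶠ δ in 𝓝[>] (0:ℝ),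
        Real.sqrt (δ ^ (1 - μ) / (1 - μ)) * Real.sqrt I < ε :=
      hb.eventually_lt_const hε
    have hS : {δ : ℝ | Real.sqrt (δ ^ (1 - μ) / (1 - μ)) * Real.sqrt I < ε} ∩ Ioo 0 η
        ∈ 𝓝[>] (0:ℝ) :=
      inter_mem hev (Ioo_mem_nhdsGT hη0)
    refine ⟨u '' _, image_mem_map hS, ?_⟩
    rintro _ ⟨a, ha, rfl⟩ _ ⟨c, hc, rfl⟩
    rcases le_total a c with h | h
    · rw [dist_eq_norm, norm_sub_rev]
      exact lt_of_le_of_lt (key a c ha.2.1 h hc.2.2.le) hc.1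
    · rw [dist_eq_norm]
      exact lt_of_le_of_lt (key c a hc.2.1 h ha.2.2.le) ha.1
  obtain ⟨L, hL⟩ := CompleteSpace.complete hcau
  have hLt : Tendsto u (𝓝[>] (0:ℝ)) (𝓝 L) := hL
  refine ⟨L, hLt, ?_⟩
  have hfin : ‖u η - L‖ ≤ Real.sqrt (η ^ (1 - μ) / (1 - μ)) * Real.sqrt I := by
    have hev : ∀ᶠ x in 𝓝[>] (0:ℝ),
        ‖u η - u x‖ ≤ Real.sqrt (η ^ (1 - μ) / (1 - μ)) * Real.sqrt I := by
      filter_upwards [Ioo_mem_nhdsGT hη0]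
        with x hx
      exact key x η hx.1 hx.2.le le_rfl
    exact le_of_tendsto ((tendsto_const_nhds.sub hLt).norm) hev
  have hC : Real.sqrt (η ^ (1 - μ) / (1 - μ)) =
      (1 - μ) ^ (-(1:ℝ) / 2) * η ^ ((1 - μ) / 2) := by
    rw [Real.sqrt_eq_rpow, Real.div_rpow (Real.rpow_nonneg hη0.le _) h1μ.le,
      ← Real.rpow_mul hη0.le, show (1 - μ) * ((1:ℝ)/2) = (1 - μ) / 2 by ring,
      show (-(1:ℝ)/2) = -((1:ℝ)/2) by ring, Real.rpow_neg h1μ.le]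
    ring
  rw [← hC]
  exact hfin
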